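/- Let X be a metric space, let ε > 0 and let y : ℕ → X satisfy d(y i, y j) > ε for all i ≠ j, and let U be a free (nonprincipal) ultrafilter on ℕ. Then there is no sequence (μ_n)_{n∈ℕ} of Borel probability measures on X with the property that for every bounded uniformly continuous f : X → ℝ and every L ∈ ℝ, if f ∘ y tends to L along U then ∫ f dμ_n → L as n → ∞. -/

import Mathlib

open MeasureTheory Filter Topology Metric Set

namespace NoWeakLimitAux

variable {X : Type*} [MetricSpace X]

/-- bump function around the points `y k`, `k ∈ S`. -/
noncomputable def F (ε : ℝ) (y : ℕ → X) (S : Set ℕ) (x : X) : ℝ :=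
  max 0 (1 - (2/ε) * infDist x (y '' S))

lemma F_nonneg (ε : ℝ) (y : ℕ → X) (S : Set ℕ) (x : X) : 0 ≤ F ε y S x := le_max_left _ _

lemma F_le_one {ε : ℝ} (hε : 0 < ε) (y : ℕ → X) (S : Set ℕ) (x : X) : F ε y S x ≤ 1 := by
  apply max_le (by norm_num)
  have h1 : 0 ≤ infDist x (y '' S) := infDist_nonneg
  have h2 : 0 ≤ 2/ε := by positivity
  nlinarith

lemma F_uc {ε : ℝ} (y : ℕ → X) (S : Set ℕ) : UniformContinuous (F ε y S) := by
  have h0 : LipschitzWith 1 (fun x : X => infDist x (y '' S)) := lipschitz_infDist_pt _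
  have h1 : LipschitzWith (Real.nnabs (2/ε)) (fun x : X => 1 - (2/ε) * infDist x (y '' S)) := by
    refine LipschitzWith.of_dist_le_mul fun a b => ?_
    have := h0.dist_le_mul a b
    rw [Real.dist_eq] at *
    have habs : |(1 - 2/ε * infDist a (y '' S)) - (1 - 2/ε * infDist b (y '' S))|
        = |2/ε| * |infDist a (y '' S) - infDist b (y '' S)| := by
      rw [← abs_mul]; rw [abs_sub_comm]; ring_nf
    rw [habs]
    have hc : (Real.nnabs (2/ε) : ℝ) = |2/ε| := Real.coe_nnabs _
    rw [hc]
    have : |infDist a (y '' S) - infDist b (y '' S)| ≤ dist a b := by simpa using this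
    exact mul_le_mul_of_nonneg_left this (abs_nonneg _)
  exact (h1.const_max 0).uniformContinuous

lemma F_eq_one {ε : ℝ} (y : ℕ → X) {S : Set ℕ} {k : ℕ} (hk : k ∈ S) :
    F ε y S (y k) = 1 := by
  have : infDist (y k) (y '' S) = 0 := infDist_zero_of_mem ⟨k, hk, rfl⟩
  simp [F, this]

lemma F_eq_zero {ε : ℝ} (hε : 0 < ε) {y : ℕ → X}
    (hy : ∀ i j : ℕ, i ≠ j → ε < dist (y i) (y j)) {S : Set ℕ} (hS : S.Nonempty)
    {k : ℕ} (hk : k ∉ S) : F ε y S (y k) = 0 := by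
  have hne : (y '' S).Nonempty := hS.image y
  have hd : ε/2 ≤ infDist (y k) (y '' S) := by
    by_contra h
    push_neg at h
    obtain ⟨z, ⟨j, hj, rfl⟩, hz⟩ := (infDist_lt_iff hne).1 h
    have : k ≠ j := fun h' => hk (h' ▸ hj)
    have := hy k j this
    rw [dist_comm] at hz
    rw [dist_comm] at this
    linarith
  have : 1 ≤ (2/ε) * infDist (y k) (y '' S) := by
    have h2 : (2/ε) * (ε/2) ≤ (2/ε) * infDist (y k) (y '' S) :=
      mul_le_mul_of_nonneg_left hd (by positivity)
    calc (1:ℝ) = (2/ε) * (ε/2) := by field_simp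
    _ ≤ _ := h2
  simp only [F]
  rw [max_eq_left]
  linarith


lemma F_eq_zero' {ε : ℝ} (hε : 0 < ε) (y : ℕ → X) {S : Set ℕ} {x : X}
    (hd : ε/2 ≤ infDist x (y '' S)) : F ε y S x = 0 := by
  have h1 : 1 ≤ (2/ε) * infDist x (y '' S) := by
    have h2 : (2/ε) * (ε/2) ≤ (2/ε) * infDist x (y '' S) :=
      mul_le_mul_of_nonneg_left hd (by positivity)
    calc (1:ℝ) = (2/ε) * (ε/2) := by field_simp
    _ ≤ _ := h2
  simp only [F]
  rw [max_eq_left]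
  linarith

/-- Monotone + subadditive bound. -/
lemma F_subadd {ε : ℝ} (hε : 0 < ε) (y : ℕ → X) {S A B : Set ℕ}
    (hS : S.Nonempty) (hA : A.Nonempty) (_hB : B.Nonempty) (hSAB : S ⊆ A ∪ B) (x : X) :
    F ε y S x ≤ F ε y A x + F ε y B x := by
  have hmono : F ε y S x ≤ F ε y (A ∪ B) x := by
    have := infDist_le_infDist_of_subset (x := x) (image_mono (f := y) hSAB) (hS.image y)
    have h2 : 0 ≤ 2/ε := by positivity
    apply max_le_max le_rfl
    nlinarith
  refine hmono.trans ?_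
  have hmin : min (infDist x (y '' A)) (infDist x (y '' B)) ≤ infDist x (y '' (A ∪ B)) := by
    by_contra h
    push_neg at h
    obtain ⟨z, hz, hzd⟩ := (infDist_lt_iff (by exact (hA.image y).mono (image_mono (f := y) subset_union_left))).1 h
    rw [image_union] at hz
    rcases hz with hz | hz
    · exact absurd hzd (not_lt.2 ((min_le_left _ _).trans (infDist_le_dist_of_mem hz)))
    · exact absurd hzd (not_lt.2 ((min_le_right _ _).trans (infDist_le_dist_of_mem hz)))
  have h2 : 0 ≤ 2/ε := by positivity
  have : F ε y (A ∪ B) x ≤ max (F ε y A x) (F ε y B x) := by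
    rcases min_le_iff.1 (le_refl (min (infDist x (y '' A)) (infDist x (y '' B)))) with _ | _
    all_goals {
      rcases le_total (infDist x (y '' A)) (infDist x (y '' B)) with hle | hle
      · refine le_max_of_le_left (max_le_max le_rfl ?_)
        have : min (infDist x (y '' A)) (infDist x (y '' B)) = infDist x (y '' A) := min_eq_left hle
        nlinarith [hmin]
      · refine le_max_of_le_right (max_le_max le_rfl ?_)
        have : min (infDist x (y '' A)) (infDist x (y '' B)) = infDist x (y '' B) := min_eq_right hle
        nlinarith [hmin] }
  exact this.trans (max_le (le_add_of_nonneg_right (F_nonneg _ _ _ _))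
    (le_add_of_nonneg_left (F_nonneg _ _ _ _)))

end NoWeakLimitAux

open MeasureTheory Filter Topology Metric Set

/-- If `y : ℕ → X` is a uniformly `ε`-separated sequence in a metric space and
`U` is a free ultrafilter on `ℕ`, then no sequence of Borel probability measures converges
weakly (against bounded uniformly continuous test functions) to the charge determined by `U`
and `y`, i.e. there is no sequence `μ n` such that `∫ f dμ n → L` whenever `f ∘ y → L`
along `U` for bounded uniformly continuous `f`. -/
theorem no_weak_limit_to_ultrafilter_charge_on_separated_sequence
    {X : Type*} [MetricSpace X] [MeasurableSpace X] [BorelSpace X]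
    (ε : ℝ) (hε : 0 < ε) (y : ℕ → X)
    (hy : ∀ i j : ℕ, i ≠ j → ε < dist (y i) (y j))
    (U : Ultrafilter ℕ) (hU : (U : Filter ℕ) ≤ Filter.cofinite) :
    ¬ ∃ μ : ℕ → Measure X,
        (∀ n, IsProbabilityMeasure (μ n)) ∧
        (∀ f : X → ℝ, UniformContinuous f → (∃ C : ℝ, ∀ x, |f x| ≤ C) →
          ∀ L : ℝ, Tendsto (f ∘ y) (U : Filter ℕ) (𝓝 L) →
            Tendsto (fun n => ∫ x, f x ∂(μ n)) atTop (𝓝 L)) := by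
  classical
  rintro ⟨μ, hprob, hconv⟩
  set G : Set ℕ → X → ℝ := fun S => NoWeakLimitAux.F ε y S with hGdef
  have hGnn : ∀ S x, 0 ≤ G S x := fun S x => NoWeakLimitAux.F_nonneg ε y S x
  have hGle : ∀ S x, G S x ≤ 1 := fun S x => NoWeakLimitAux.F_le_one hε y S x
  have hGuc : ∀ S, UniformContinuous (G S) := fun S => NoWeakLimitAux.F_uc y S
  have hGbd : ∀ S : Set ℕ, ∃ C : ℝ, ∀ x, |G S x| ≤ C :=
    fun S => ⟨1, fun x => abs_le.2 ⟨by linarith [hGnn S x], hGle S x⟩⟩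
  have hGint : ∀ S n, Integrable (G S) (μ n) := by
    intro S n
    haveI := hprob n
    refine Integrable.mono' (integrable_const 1) ((hGuc S).continuous.aestronglyMeasurable) ?_
    exact Filter.Eventually.of_forall fun x => abs_le.2 ⟨by linarith [hGnn S x], hGle S x⟩
  -- weak limits
  have hlim1 : ∀ S : Set ℕ, S ∈ U → Tendsto (fun n => ∫ x, G S x ∂ μ n) atTop (𝓝 1) := by
    intro S hS
    refine hconv (G S) (hGuc S) (hGbd S) 1 ?_
    have h1 : ∀ᶠ k in (U : Filter ℕ), (G S ∘ y) k = 1 := by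
      filter_upwards [hS] with k hk
      exact NoWeakLimitAux.F_eq_one y hk
    exact Tendsto.congr' (h1.mono fun k h => h.symm) tendsto_const_nhds
  have hlim0 : ∀ m : ℕ, 1 ≤ m → Tendsto (fun n => ∫ x, G (Set.Iio m) x ∂ μ n) atTop (𝓝 0) := by
    intro m hm
    refine hconv _ (hGuc _) (hGbd _) 0 ?_
    have hcf : {k : ℕ | k ∉ Set.Iio m} ∈ (U : Filter ℕ) := by
      apply hU
      have hfin : (Set.Iio m : Set ℕ).Finite := Set.finite_Iio m
      simpa [Set.compl_def] using hfin.compl_mem_cofinite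
    have h0 : ∀ᶠ k in (U : Filter ℕ), (G (Set.Iio m) ∘ y) k = 0 := by
      filter_upwards [hcf] with k hk
      exact NoWeakLimitAux.F_eq_zero hε hy ⟨0, by simpa using lt_of_lt_of_le Nat.zero_lt_one hm⟩ hk
    exact Tendsto.congr' (h0.mono fun k h => h.symm) tendsto_const_nhds
  -- tail sets
  set V : ℕ → Set X := fun m => ⋃ j : ℕ, ball (y (j + m)) (ε/2) with hVdef
  have hVmeas : ∀ m, MeasurableSet (V m) := fun m => MeasurableSet.iUnion fun j => measurableSet_ball
  have hGV : ∀ m n, ∫ x, G (Set.Ici m) x ∂ μ n ≤ (μ n (V m)).toReal := by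
    intro m n
    haveI := hprob n
    have hpt : ∀ x, G (Set.Ici m) x ≤ (V m).indicator (fun _ => (1:ℝ)) x := by
      intro x
      by_cases hx : x ∈ V m
      · rw [Set.indicator_of_mem hx]; exact hGle _ x
      · rw [Set.indicator_of_notMem hx]
        have hd : ε/2 ≤ infDist x (y '' Set.Ici m) := by
          by_contra h
          push_neg at h
          have hne : (y '' Set.Ici m).Nonempty := ⟨y m, Set.mem_image_of_mem y (Set.mem_Ici.2 le_rfl)⟩
          obtain ⟨z, ⟨k, hk, rfl⟩, hz⟩ := (infDist_lt_iff hne).1 h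
          exact hx (Set.mem_iUnion.2 ⟨k - m, by
            rw [Nat.sub_add_cancel hk]; exact mem_ball.2 hz⟩)
        simp only [hGdef]
        exact le_of_eq (NoWeakLimitAux.F_eq_zero' hε y hd)
    have hind : Integrable ((V m).indicator fun _ => (1:ℝ)) (μ n) :=
      (integrable_const 1).indicator (hVmeas m)
    calc ∫ x, G (Set.Ici m) x ∂ μ n
        ≤ ∫ x, (V m).indicator (fun _ => (1:ℝ)) x ∂ μ n := integral_mono (hGint _ n) hind hpt
      _ = (μ n (V m)).toReal := by
          rw [integral_indicator_const (1:ℝ) (hVmeas m)]; simp; rfl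
  -- tail smallness
  have htail : ∀ n m0 : ℕ, ∃ m', m0 < m' ∧ μ n (V m') < ENNReal.ofReal (1/4) := by
    intro n m0
    haveI := hprob n
    have hdisj : Pairwise (Function.onFun Disjoint fun k => ball (y k) (ε/2)) := by
      intro i j hij
      refine Set.disjoint_left.2 fun x hxi hxj => ?_
      have h1 : dist (y i) (y j) < ε := by
        calc dist (y i) (y j) ≤ dist (y i) x + dist x (y j) := dist_triangle _ _ _
          _ < ε/2 + ε/2 := add_lt_add (by simpa [dist_comm] using mem_ball.1 hxi) (mem_ball.1 hxj)
          _ = ε := by ring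
      linarith [hy i j hij]
    have hsum : ∑' k, μ n (ball (y k) (ε/2)) ≤ 1 := by
      rw [← measure_iUnion hdisj fun k => measurableSet_ball]
      exact (measure_mono (Set.subset_univ _)).trans_eq measure_univ
    have htend : Tendsto (fun m => ∑' k, μ n (ball (y (k + m)) (ε/2))) atTop (𝓝 0) :=
      ENNReal.tendsto_sum_nat_add _ (by
        intro h
        rw [h] at hsum
        exact absurd hsum (by simp))
    have hev : ∀ᶠ m in atTop, ∑' k, μ n (ball (y (k + m)) (ε/2)) < ENNReal.ofReal (1/4) :=
      htend.eventually (gt_mem_nhds (ENNReal.ofReal_pos.2 (by norm_num)))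
    obtain ⟨m', hm1, hm2⟩ := ((eventually_gt_atTop m0).and hev).exists
    exact ⟨m', hm1, lt_of_le_of_lt (measure_iUnion_le _) hm2⟩
  -- eventual smallness for initial segments
  have hA2 : ∀ m n0 : ℕ, ∃ n', n0 < n' ∧
      (1 ≤ m → ∀ n, n' ≤ n → ∫ x, G (Set.Iio m) x ∂ μ n < 1/4) := by
    intro m n0
    by_cases hm : 1 ≤ m
    · have hev := (hlim0 m hm).eventually (gt_mem_nhds (by norm_num : (0:ℝ) < 1/4))
      obtain ⟨N, hN⟩ := eventually_atTop.1 hev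
      exact ⟨max N (n0+1), lt_of_lt_of_le (Nat.lt_succ_self n0) (le_max_right _ _),
        fun _ n hn => hN n (le_trans (le_max_left _ _) hn)⟩
    · exact ⟨n0+1, Nat.lt_succ_self n0, fun h => absurd h hm⟩
  choose mm hmm1 hmm2 using htail
  choose nn hnn1 hnn2 using hA2
  -- the recursive construction
  set step : ℕ × ℕ → ℕ × ℕ := fun p => (mm p.2 p.1, nn (mm p.2 p.1) p.2) with hstep
  set s : ℕ → ℕ × ℕ := fun i => step^[i] (1, nn 1 0) with hs
  set a : ℕ → ℕ := fun i => (s i).1 with hadef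
  set b : ℕ → ℕ := fun i => (s i).2 with hbdef
  have hs_succ : ∀ i, s (i+1) = step (s i) := fun i => Function.iterate_succ_apply' _ _ _
  have ha0 : a 0 = 1 := rfl
  have ha_succ : ∀ i, a (i+1) = mm (b i) (a i) := fun i => by
    simp only [hadef, hbdef, hs_succ i, hstep]
  have hb_succ : ∀ i, b (i+1) = nn (a (i+1)) (b i) := fun i => by
    simp only [hadef, hbdef, hs_succ i, hstep]
  have haS : StrictMono a := strictMono_nat_of_lt_succ fun i => by
    rw [ha_succ]; exact hmm1 _ _
  have hbS : StrictMono b := strictMono_nat_of_lt_succ fun i => by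
    rw [hb_succ]; exact hnn1 _ _
  have ha1 : ∀ i, 1 ≤ a i := fun i => ha0 ▸ haS.monotone (Nat.zero_le i)
  have hI1 : ∀ i, ∀ n, b i ≤ n → ∫ x, G (Set.Iio (a i)) x ∂ μ n < 1/4 := by
    intro i
    cases i with
    | zero => exact hnn2 1 0 le_rfl
    | succ i =>
        rw [hb_succ]
        exact hnn2 (a (i+1)) (b i) (ha1 _)
  have hI2 : ∀ i, μ (b i) (V (a (i+1))) < ENNReal.ofReal (1/4) := fun i => by
    rw [ha_succ]; exact hmm2 (b i) (a i)
  -- block index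
  have hex : ∀ k : ℕ, ∃ i, k < a i := fun k =>
    ⟨k+1, lt_of_lt_of_le (Nat.lt_succ_self k) haS.le_apply⟩
  set r : ℕ → ℕ := fun k => Nat.find (hex k) with hrdef
  have hr_spec : ∀ k, k < a (r k) := fun k => Nat.find_spec (hex k)
  have hr_block : ∀ i k, a i ≤ k → k < a (i+1) → r k = i + 1 := by
    intro i k h1 h2
    have hle : r k ≤ i + 1 := Nat.find_le h2
    have hgt : i < r k := by
      by_contra h
      push_neg at h
      exact absurd (hr_spec k) (not_lt.2 (le_trans (haS.monotone h) h1))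
    omega
  set T : Set ℕ := {k | Even (r k)} with hTdef
  -- key estimate
  have hkey : ∀ (S : Set ℕ) (i : ℕ), S.Nonempty → (∀ k ∈ S, k < a i ∨ a (i+1) ≤ k) →
      ∫ x, G S x ∂ μ (b i) < 1/2 := by
    intro S i hSne hSsub
    have hsub : ∀ x, G S x ≤ G (Set.Iio (a i)) x + G (Set.Ici (a (i+1))) x := by
      intro x
      refine NoWeakLimitAux.F_subadd hε y hSne
        ⟨0, show (0:ℕ) ∈ Set.Iio (a i) from lt_of_lt_of_le Nat.zero_lt_one (ha1 i)⟩
        ⟨a (i+1), Set.mem_Ici.2 le_rfl⟩ (fun k hk => ?_) x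
      rcases hSsub k hk with h | h
      · exact Or.inl h
      · exact Or.inr h
    have hle : ∫ x, G S x ∂ μ (b i)
        ≤ ∫ x, (G (Set.Iio (a i)) x + G (Set.Ici (a (i+1))) x) ∂ μ (b i) :=
      integral_mono (hGint _ _) ((hGint _ _).add (hGint _ _)) hsub
    rw [integral_add (hGint _ _) (hGint _ _)] at hle
    have h1 := hI1 i (b i) le_rfl
    have h2 : ∫ x, G (Set.Ici (a (i+1))) x ∂ μ (b i) < 1/4 :=
      lt_of_le_of_lt (hGV (a (i+1)) (b i)) (ENNReal.toReal_lt_of_lt_ofReal (hI2 i))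
    linarith
  -- T avoids odd blocks, Tᶜ avoids even blocks
  have hTavoid : ∀ i, Even i → ∀ k ∈ T, k < a i ∨ a (i+1) ≤ k := by
    intro i hi k hk
    by_contra h
    push_neg at h
    obtain ⟨h1, h2⟩ := h
    have := hr_block i k h1 h2
    have hkEv : Even (r k) := hk
    rw [this] at hkEv
    exact (Nat.even_add_one.1 hkEv) hi
  have hTcavoid : ∀ i, ¬ Even i → ∀ k ∈ Tᶜ, k < a i ∨ a (i+1) ≤ k := by
    intro i hi k hk
    by_contra h
    push_neg at h
    obtain ⟨h1, h2⟩ := h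
    have hrk := hr_block i k h1 h2
    have : Even (r k) := by rw [hrk]; exact Nat.even_add_one.2 hi
    exact hk this
  have hTne : T.Nonempty := ⟨0, show Even (r 0) by
    have : r 0 = 0 := Nat.find_eq_zero (hex 0) |>.2 (lt_of_lt_of_le Nat.zero_lt_one (ha0.ge))
    rw [this]; exact Even.zero⟩
  have hTcne : Tᶜ.Nonempty := ⟨a 0, by
    have : r (a 0) = 1 := hr_block 0 (a 0) le_rfl (haS (Nat.lt_succ_self 0))
    show ¬ Even (r (a 0))
    rw [this]; simp⟩
  -- final contradiction
  rcases U.mem_or_compl_mem T with hTU | hTU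
  · have hlim := hlim1 T hTU
    obtain ⟨N, hN⟩ := eventually_atTop.1 (hlim.eventually (lt_mem_nhds (by norm_num : (1:ℝ)/2 < 1)))
    have hge : N ≤ b (2*N) := le_trans (Nat.le_mul_of_pos_left N Nat.zero_lt_two) hbS.le_apply
    have h1 := hN (b (2*N)) hge
    have h2 := hkey T (2*N) hTne (hTavoid (2*N) (even_two_mul N))
    linarith
  · have hlim := hlim1 Tᶜ hTU
    obtain ⟨N, hN⟩ := eventually_atTop.1 (hlim.eventually (lt_mem_nhds (by norm_num : (1:ℝ)/2 < 1)))
    have hge : N ≤ b (2*N+1) := le_trans (le_trans (Nat.le_mul_of_pos_left N Nat.zero_lt_two) (Nat.le_succ _)) hbS.le_apply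
    have h1 := hN (b (2*N+1)) hge
    have h2 := hkey Tᶜ (2*N+1) hTcne (hTcavoid (2*N+1) (by simp [Nat.even_add_one, parity_simps]))
    linarith
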